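/- Let {x_k}_{k≥0} and {ξ_k}_{k≥1} be nonnegative sequences with x_k ≤ A x_{k-1} + B ξ_k for all k ≥ 1, where 0 < A < 1 and B > 0. If ξ_k ≤ ξ k^{-α} for some ξ ≥ 0 and α ≥ 0, then there exists a constant C depending only on α and A such that x_k ≤ A^k x_0 + C B ξ / k^α for all k ≥ 1. -/

import Mathlib

set_option maxHeartbeats 1000000 in
/-- for nonnegative sequences with `x_k ≤ A x_{k-1} + B ξ_k` and polynomially
decaying errors `ξ_k ≤ ξ k^{-α}`, there is a constant `C` depending only on `α` and `A`
with `x_k ≤ A^k x_0 + C B ξ / k^α` for all `k ≥ 1`. -/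
theorem stmt7 (A α : ℝ) (hA0 : 0 < A) (hA1 : A < 1) (hα : 0 ≤ α) :
    ∃ C : ℝ, 0 < C ∧ ∀ (B ξ : ℝ), 0 < B → 0 ≤ ξ →
      ∀ (x ξs : ℕ → ℝ), (∀ k, 0 ≤ x k) → (∀ k, 1 ≤ k → 0 ≤ ξs k) →
        (∀ k, x (k + 1) ≤ A * x k + B * ξs (k + 1)) →
        (∀ k : ℕ, 1 ≤ k → ξs k ≤ ξ / (k : ℝ) ^ α) →
        ∀ k : ℕ, 1 ≤ k → x k ≤ A ^ k * x 0 + C * B * ξ / (k : ℝ) ^ α := by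
  obtain ⟨θ, hθdef⟩ : ∃ θ : ℝ, θ = (1 + A) / 2 := ⟨_, rfl⟩
  have hθ1 : θ < 1 := by rw [hθdef]; linarith
  have hAθ : A < θ := by rw [hθdef]; linarith
  have hθ0 : 0 < θ := by rw [hθdef]; linarith
  -- choose K with (1 + 1/K)^α ≤ θ/A
  have htend : Filter.Tendsto (fun n : ℕ => (1 + 1 / (n : ℝ)) ^ α)
      Filter.atTop (nhds 1) := by
    have h1 : Filter.Tendsto (fun n : ℕ => (1 + 1 / (n : ℝ))) Filter.atTop (nhds 1) := by
      have := (tendsto_const_nhds : Filter.Tendsto (fun _ : ℕ => (1:ℝ)) Filter.atTop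
        (nhds 1)).add tendsto_one_div_atTop_nhds_zero_nat
      simpa using this
    have := h1.rpow (tendsto_const_nhds : Filter.Tendsto (fun _ : ℕ => α) Filter.atTop
      (nhds α)) (Or.inl one_ne_zero)
    simpa using this
  have hlt : ∀ᶠ n : ℕ in Filter.atTop, (1 + 1 / (n : ℝ)) ^ α < θ / A := by
    apply htend.eventually_lt_const
    rw [lt_div_iff₀ hA0]; linarith
  obtain ⟨K0, hK0⟩ := Filter.eventually_atTop.mp hlt
  obtain ⟨K, hKdef⟩ : ∃ K : ℕ, K = max K0 1 := ⟨_, rfl⟩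
  have hK1 : 1 ≤ K := hKdef ▸ le_max_right _ _
  have hKR : (1 : ℝ) ≤ (K : ℝ) := by exact_mod_cast hK1
  have hKbound : (1 + 1 / (K : ℝ)) ^ α ≤ θ / A :=
    (hK0 K (hKdef ▸ le_max_left _ _)).le
  obtain ⟨C, hCdef⟩ : ∃ C : ℝ, C = max (2 / (1 - A)) ((K : ℝ) * (K : ℝ) ^ α) + 1 :=
    ⟨_, rfl⟩
  have hC2 : 2 / (1 - A) ≤ C := by
    rw [hCdef]
    have := le_max_left (2 / (1 - A)) ((K : ℝ) * (K : ℝ) ^ α)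
    linarith
  have hCK : (K : ℝ) * (K : ℝ) ^ α ≤ C := by
    rw [hCdef]
    have := le_max_right (2 / (1 - A)) ((K : ℝ) * (K : ℝ) ^ α)
    linarith
  have hC0 : 0 < C := lt_of_lt_of_le (div_pos two_pos (by linarith)) hC2
  refine ⟨C, hC0, ?_⟩
  intro B ξ hB hξ x ξs hx hξs hrec hdecay
  -- crude linear bound
  have hsmall : ∀ k : ℕ, x k ≤ A ^ k * x 0 + B * ξ * k := by
    intro k
    induction k with
    | zero => simp
    | succ n ih =>
      have h1 : ξs (n + 1) ≤ ξ := by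
        have hd := hdecay (n + 1) (by omega)
        have hpow : (1 : ℝ) ≤ ((n + 1 : ℕ) : ℝ) ^ α := by
          apply Real.one_le_rpow _ hα
          push_cast; linarith [Nat.cast_nonneg (α := ℝ) n]
        calc ξs (n + 1) ≤ ξ / ((n + 1 : ℕ) : ℝ) ^ α := hd
          _ ≤ ξ := div_le_self hξ hpow
      have h2 := hrec n
      have h3 : A * x n ≤ A * (A ^ n * x 0 + B * ξ * n) :=
        mul_le_mul_of_nonneg_left ih hA0.le
      have h4 : B * ξs (n + 1) ≤ B * ξ := mul_le_mul_of_nonneg_left h1 hB.le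
      have hBξn : 0 ≤ B * ξ * n := by positivity
      have h5 : A * (B * ξ * n) ≤ B * ξ * n := mul_le_of_le_one_left hBξn hA1.le
      push_cast
      calc x (n + 1) ≤ A * x n + B * ξs (n + 1) := h2
        _ ≤ A * (A ^ n * x 0 + B * ξ * n) + B * ξ := by linarith
        _ = A ^ (n + 1) * x 0 + A * (B * ξ * n) + B * ξ := by ring
        _ ≤ A ^ (n + 1) * x 0 + B * ξ * n + B * ξ := by linarith
        _ = A ^ (n + 1) * x 0 + B * ξ * ((n : ℝ) + 1) := by ring
  -- conversion for small k ≤ K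
  have hconv : ∀ k : ℕ, 1 ≤ k → k ≤ K →
      x k ≤ A ^ k * x 0 + C * B * ξ / (k : ℝ) ^ α := by
    intro k hk1 hkK
    have hk1R : (1 : ℝ) ≤ (k : ℝ) := by exact_mod_cast hk1
    have hkKR : (k : ℝ) ≤ (K : ℝ) := by exact_mod_cast hkK
    have hpos : (0 : ℝ) < (k : ℝ) ^ α := Real.rpow_pos_of_pos (by linarith) α
    have hkk : (k : ℝ) * (k : ℝ) ^ α ≤ C := by
      have h1 : (k : ℝ) ^ α ≤ (K : ℝ) ^ α :=
        Real.rpow_le_rpow (by linarith) hkKR hα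
      have h2 : (0 : ℝ) ≤ (k : ℝ) ^ α := hpos.le
      nlinarith
    have hkey : B * ξ * k ≤ C * B * ξ / (k : ℝ) ^ α := by
      rw [le_div_iff₀ hpos]
      have : (k : ℝ) * (k : ℝ) ^ α * (B * ξ) ≤ C * (B * ξ) :=
        mul_le_mul_of_nonneg_right hkk (by positivity)
      nlinarith
    linarith [hsmall k]
  -- main bound for k ≥ K by induction
  have hbig : ∀ k : ℕ, K ≤ k → x k ≤ A ^ k * x 0 + C * B * ξ / (k : ℝ) ^ α := by
    intro k hk
    induction k, hk using Nat.le_induction with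
    | base => exact hconv K hK1 le_rfl
    | succ n hn ih =>
      have hn1 : 1 ≤ n := le_trans hK1 hn
      have hnR : (1 : ℝ) ≤ (n : ℝ) := by exact_mod_cast hn1
      have hnK : (K : ℝ) ≤ (n : ℝ) := by exact_mod_cast hn
      have hpa : (0 : ℝ) < (n : ℝ) ^ α := Real.rpow_pos_of_pos (by linarith) α
      have hpb : (0 : ℝ) < ((n : ℝ) + 1) ^ α := Real.rpow_pos_of_pos (by linarith) α
      -- ratio bound
      have hratio : ((n : ℝ) + 1) ^ α * A ≤ θ * (n : ℝ) ^ α := by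
        have h1 : ((n : ℝ) + 1) / (n : ℝ) ≤ 1 + 1 / (K : ℝ) := by
          rw [div_le_iff₀ (by linarith)]
          have h1a : (1 : ℝ) ≤ 1 / (K : ℝ) * (n : ℝ) := by
            rw [one_div, ← div_eq_inv_mul, le_div_iff₀ (by linarith)]
            linarith
          nlinarith
        have h2 : (((n : ℝ) + 1) / (n : ℝ)) ^ α ≤ (1 + 1 / (K : ℝ)) ^ α :=
          Real.rpow_le_rpow (by positivity) h1 hα
        have h3 : (((n : ℝ) + 1) / (n : ℝ)) ^ α = ((n : ℝ) + 1) ^ α / (n : ℝ) ^ α :=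
          Real.div_rpow (by linarith) (by linarith) α
        have h4 : ((n : ℝ) + 1) ^ α / (n : ℝ) ^ α ≤ θ / A := by
          rw [← h3]; exact le_trans h2 hKbound
        rw [div_le_div_iff₀ hpa hA0] at h4
        linarith
      have h6 : θ * C + 1 ≤ C := by
        have h7 : (1 - θ) * (2 / (1 - A)) ≤ (1 - θ) * C :=
          mul_le_mul_of_nonneg_left hC2 (by linarith)
        have hne : (1 : ℝ) - A ≠ 0 := by intro h; linarith
        have h8 : (1 - θ) * (2 / (1 - A)) = 1 := by
          rw [hθdef]; field_simp; ring
        nlinarith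
      -- key scalar inequality
      have hkey : A * C / (n : ℝ) ^ α + 1 / ((n : ℝ) + 1) ^ α ≤ C / ((n : ℝ) + 1) ^ α := by
        have hstep1 : A * C / (n : ℝ) ^ α ≤ θ * C / ((n : ℝ) + 1) ^ α := by
          rw [div_le_div_iff₀ hpa hpb]
          nlinarith [mul_le_mul_of_nonneg_left hratio hC0.le]
        have hstep2 : (θ * C + 1) / ((n : ℝ) + 1) ^ α ≤ C / ((n : ℝ) + 1) ^ α :=
          (div_le_div_iff_of_pos_right hpb).mpr h6
        have hsum : θ * C / ((n : ℝ) + 1) ^ α + 1 / ((n : ℝ) + 1) ^ α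
            = (θ * C + 1) / ((n : ℝ) + 1) ^ α := (add_div _ _ _).symm
        linarith
      -- assemble
      have hd := hdecay (n + 1) (by omega)
      have hcast : ((n + 1 : ℕ) : ℝ) = (n : ℝ) + 1 := by push_cast; ring
      rw [hcast] at hd
      have h2 := hrec n
      have h3 : A * x n ≤ A * (A ^ n * x 0 + C * B * ξ / (n : ℝ) ^ α) :=
        mul_le_mul_of_nonneg_left ih hA0.le
      have h4 : B * ξs (n + 1) ≤ B * (ξ / ((n : ℝ) + 1) ^ α) :=
        mul_le_mul_of_nonneg_left hd hB.le
      have hkey2 : B * ξ * (A * C / (n : ℝ) ^ α + 1 / ((n : ℝ) + 1) ^ α) ≤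
          B * ξ * (C / ((n : ℝ) + 1) ^ α) :=
        mul_le_mul_of_nonneg_left hkey (by positivity)
      have heq1 : A * (A ^ n * x 0 + C * B * ξ / (n : ℝ) ^ α) + B * (ξ / ((n : ℝ) + 1) ^ α)
          = A ^ (n + 1) * x 0 + B * ξ * (A * C / (n : ℝ) ^ α + 1 / ((n : ℝ) + 1) ^ α) := by
        ring
      have heq2 : A ^ (n + 1) * x 0 + B * ξ * (C / ((n : ℝ) + 1) ^ α)
          = A ^ (n + 1) * x 0 + C * B * ξ / ((n : ℝ) + 1) ^ α := by ring
      rw [hcast]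
      linarith [h2, h3, h4, hkey2, heq1.le, heq2.le]
  intro k hk
  rcases le_or_gt k K with h | h
  · exact hconv k hk h
  · exact hbig k h.le
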